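/- Let x = (x₁, x₂) be a standard 2D Gaussian and b > 0, with label y = +1 if x₂ < b|x₁| and y = −1 otherwise. Then the optimal error over homogeneous halfspaces satisfies OPT = 1/2 − arctan(1/b)/π; in particular OPT → 0 as b → 0⁺ and OPT → 1/2 as b → ∞. -/

import Mathlib

open MeasureTheory ProbabilityTheory Filter Real Set
open scoped ENNReal NNReal

noncomputable def γ : Measure ℝ := gaussianReal 0 1
noncomputable def μ2 : Measure (ℝ × ℝ) := γ.prod γ

instance : IsProbabilityMeasure γ := by unfold γ; infer_instance
instance : SigmaFinite γ := by infer_instance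
instance : IsProbabilityMeasure μ2 := by unfold μ2; infer_instance

lemma gamma_neg : Measure.map (fun x : ℝ => -x) γ = γ := by
  have := gaussianReal_map_const_mul (μ := 0) (v := 1) (-1)
  have h2 : (fun x : ℝ => -x) = (fun x : ℝ => (-1) * x) := by funext x; ring
  have h3 : (NNReal.mk ((-1:ℝ)^2) (sq_nonneg _)) * 1 = 1 := by ext; norm_num
  rw [γ, h2, this, h3]
  norm_num

lemma mu2_neg : Measure.map (fun p : ℝ × ℝ => (-p.1, -p.2)) μ2 = μ2 := by
  have h : (fun p : ℝ × ℝ => (-p.1, -p.2)) = Prod.map (fun x : ℝ => -x) (fun x : ℝ => -x) := rfl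
  rw [μ2, h, ← Measure.map_prod_map _ _ measurable_neg measurable_neg, gamma_neg]

lemma gamma_singleton (a : ℝ) : γ {a} = 0 := by
  refine gaussianReal_absolutelyContinuous 0 (by norm_num) ?_
  simp

-- null line
lemma null_line (w : ℝ × ℝ) (hw : w ≠ 0) : μ2 {x : ℝ × ℝ | w.1 * x.1 + w.2 * x.2 = 0} = 0 := by
  have hs : MeasurableSet {x : ℝ × ℝ | w.1 * x.1 + w.2 * x.2 = 0} := by
    have : Measurable fun x : ℝ × ℝ => w.1 * x.1 + w.2 * x.2 := by fun_prop
    exact this (measurableSet_singleton 0)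
  by_cases h2 : w.2 = 0
  · have h1 : w.1 ≠ 0 := by
      intro h1; exact hw (Prod.ext h1 h2)
    have hsub : {x : ℝ × ℝ | w.1 * x.1 + w.2 * x.2 = 0} ⊆ ({0} : Set ℝ) ×ˢ (univ : Set ℝ) := by
      intro x hx
      simp only [mem_setOf_eq, h2, zero_mul, add_zero] at hx
      have : x.1 = 0 := (mul_eq_zero.1 hx).resolve_left h1
      exact ⟨this, trivial⟩
    refine le_antisymm (le_trans (measure_mono hsub) ?_) (by positivity)
    rw [μ2, Measure.prod_prod, gamma_singleton, zero_mul]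
  · rw [μ2, Measure.measure_prod_null hs]
    refine ae_of_all _ fun x => ?_
    have heq : (Prod.mk x ⁻¹' {y : ℝ × ℝ | w.1 * y.1 + w.2 * y.2 = 0}) = {-(w.1 * x) / w.2} := by
      ext y
      simp only [mem_preimage, mem_setOf_eq, mem_singleton_iff]
      constructor
      · intro h; field_simp; linarith
      · intro h; rw [h]; field_simp; ring
    show γ (Prod.mk x ⁻¹' {y : ℝ × ℝ | w.1 * y.1 + w.2 * y.2 = 0}) = 0
    rw [heq]; exact gamma_singleton _

lemma halfplane_half (w : ℝ × ℝ) (hw : w ≠ 0) :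
    μ2 {x : ℝ × ℝ | w.1 * x.1 + w.2 * x.2 ≤ 0} = 1/2 := by
  set f : ℝ × ℝ → ℝ := fun x => w.1 * x.1 + w.2 * x.2 with hf
  have hfm : Measurable f := by fun_prop
  have hA : MeasurableSet {x : ℝ × ℝ | f x ≤ 0} := hfm measurableSet_Iic
  have hB : MeasurableSet {x : ℝ × ℝ | 0 ≤ f x} := hfm measurableSet_Ici
  have hsym : μ2 {x : ℝ × ℝ | f x ≤ 0} = μ2 {x : ℝ × ℝ | 0 ≤ f x} := by
    conv_lhs => rw [← mu2_neg]
    rw [Measure.map_apply (by fun_prop) hA]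
    congr 1
    ext x
    simp only [mem_preimage, mem_setOf_eq, hf]
    constructor <;> intro h <;> nlinarith
  have hunion : μ2 {x : ℝ × ℝ | f x ≤ 0} + μ2 {x : ℝ × ℝ | 0 ≤ f x} = 1 + μ2 {x : ℝ × ℝ | f x = 0} := by
    have := measure_union_add_inter (μ := μ2) (s := {x : ℝ × ℝ | f x ≤ 0}) hB
    have hu : {x : ℝ × ℝ | f x ≤ 0} ∪ {x : ℝ × ℝ | 0 ≤ f x} = univ := by
      ext x; simp [le_total]
    have hi : {x : ℝ × ℝ | f x ≤ 0} ∩ {x : ℝ × ℝ | 0 ≤ f x} = {x : ℝ × ℝ | f x = 0} := by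
      ext x; simp [le_antisymm_iff, and_comm]
    rw [hu, hi] at this
    rw [← this, measure_univ]
  rw [null_line w hw] at hunion
  rw [← hsym] at hunion
  have : (2 : ℝ≥0∞) * μ2 ({x : ℝ × ℝ | f x ≤ 0}) = 1 := by
    rw [two_mul, hunion, add_zero]
  rw [ENNReal.eq_div_iff (by norm_num : (2:ℝ≥0∞) ≠ 0) (by norm_num : (2:ℝ≥0∞) ≠ ⊤)]
  exact this

-- radial integral
lemma aux_radial : ∫ r in Ioi (0:ℝ), r * Real.exp (-(r^2)/2) = 1 := by
  have hint : IntegrableOn (fun r : ℝ => r * Real.exp (-(r^2)/2)) (Ioi 0) := by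
    have := (integrable_mul_exp_neg_mul_sq (by norm_num : (0:ℝ) < 1/2)).integrableOn (s := Ioi 0)
    refine this.congr_fun (fun x _ => by ring_nf) measurableSet_Ioi
  have hderiv : ∀ x ∈ Ioi (0:ℝ), HasDerivAt (fun r : ℝ => -Real.exp (-(r^2)/2))
      (x * Real.exp (-(x^2)/2)) x := by
    intro x _
    have h1 : HasDerivAt (fun r : ℝ => -(r^2)/2) (-x) x := by
      have := ((hasDerivAt_pow 2 x).neg).div_const 2
      simpa using this.congr_deriv (by ring)
    have := (h1.exp).fun_neg
    exact this.congr_deriv (by ring)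
  have hcont : ContinuousWithinAt (fun r : ℝ => -Real.exp (-(r^2)/2)) (Ici 0) 0 :=
    (Continuous.continuousWithinAt (by continuity))
  have htend : Tendsto (fun r : ℝ => -Real.exp (-(r^2)/2)) atTop (nhds 0) := by
    rw [← neg_zero]
    refine Tendsto.neg ?_
    refine Real.tendsto_exp_atBot.comp ?_
    have : Tendsto (fun r : ℝ => r^2/2) atTop atTop :=
      (tendsto_pow_atTop (by norm_num)).atTop_div_const (by norm_num)
    simpa [Function.comp_def, neg_div] using tendsto_neg_atTop_atBot.comp this
  have := MeasureTheory.integral_Ioi_of_hasDerivAt_of_tendsto hcont hderiv hint htend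
  rw [this]
  simp


lemma trig_iff {b : ℝ} (hb : 0 < b) {θ : ℝ} (hθ : θ ∈ Ioo (-π) π) :
    b * |Real.cos θ| ≤ Real.sin θ ↔ θ ∈ Icc (Real.arctan b) (π - Real.arctan b) := by
  set ψ := Real.arctan b with hψdef
  have hψ0 : 0 < ψ := by
    have := Real.arctan_strictMono hb
    rwa [Real.arctan_zero] at this
  have hψ2 : ψ < π / 2 := Real.arctan_lt_pi_div_two b
  have hcψ : 0 < Real.cos ψ := Real.cos_arctan_pos b
  have hsψ : Real.sin ψ = b * Real.cos ψ := by
    have ht : Real.tan ψ = b := Real.tan_arctan b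
    rw [Real.tan_eq_sin_div_cos] at ht
    field_simp at ht
    linarith [ht]
  have key : b * |Real.cos θ| ≤ Real.sin θ ↔
      Real.sin ψ * |Real.cos θ| ≤ Real.sin θ * Real.cos ψ := by
    rw [hsψ]
    constructor
    · intro h
      calc b * Real.cos ψ * |Real.cos θ| = (b * |Real.cos θ|) * Real.cos ψ := by ring
        _ ≤ Real.sin θ * Real.cos ψ := by
            exact mul_le_mul_of_nonneg_right h hcψ.le
    · intro h
      have h2 : (b * |Real.cos θ|) * Real.cos ψ ≤ Real.sin θ * Real.cos ψ := by
        calc (b * |Real.cos θ|) * Real.cos ψ = b * Real.cos ψ * |Real.cos θ| := by ring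
          _ ≤ Real.sin θ * Real.cos ψ := h
      exact le_of_mul_le_mul_right h2 hcψ
  obtain ⟨hθ1, hθ2⟩ := hθ
  have hsψpos : 0 < Real.sin ψ :=
    Real.sin_pos_of_pos_of_lt_pi hψ0 (by linarith [Real.pi_pos])
  rw [key]
  constructor
  · intro h
    have hsin : 0 ≤ Real.sin θ := by
      nlinarith [mul_nonneg hsψpos.le (abs_nonneg (Real.cos θ))]
    have hθpos : 0 < θ := by
      rcases lt_trichotomy θ 0 with h1 | h1 | h1
      · exact absurd (Real.sin_neg_of_neg_of_neg_pi_lt h1 hθ1) (not_lt.2 hsin)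
      · exfalso
        rw [h1] at h
        simp [Real.sin_zero, Real.cos_zero] at h
        nlinarith
      · exact h1
    constructor
    · by_contra hc
      push_neg at hc
      have hcos : 0 < Real.cos θ := Real.cos_pos_of_mem_Ioo ⟨by linarith [Real.pi_pos], by linarith⟩
      rw [abs_of_pos hcos] at h
      have hneg : Real.sin (θ - ψ) < 0 :=
        Real.sin_neg_of_neg_of_neg_pi_lt (by linarith) (by linarith [Real.pi_pos])
      rw [Real.sin_sub] at hneg
      nlinarith
    · by_contra hc
      push_neg at hc
      have hcos : Real.cos θ < 0 :=
        Real.cos_neg_of_pi_div_two_lt_of_lt (by linarith) (by linarith [Real.pi_pos])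
      rw [abs_of_neg hcos] at h
      have hpos : 0 < Real.sin (θ + ψ - π) :=
        Real.sin_pos_of_pos_of_lt_pi (by linarith) (by linarith)
      rw [Real.sin_sub_pi] at hpos
      rw [Real.sin_add] at hpos
      nlinarith
  · rintro ⟨h1, h2⟩
    rcases le_or_gt 0 (Real.cos θ) with hcos | hcos
    · rw [abs_of_nonneg hcos]
      have : 0 ≤ Real.sin (θ - ψ) :=
        Real.sin_nonneg_of_nonneg_of_le_pi (by linarith) (by linarith)
      rw [Real.sin_sub] at this
      nlinarith
    · rw [abs_of_neg hcos]
      have : 0 ≤ Real.sin (θ + ψ) :=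
        Real.sin_nonneg_of_nonneg_of_le_pi (by linarith) (by linarith)
      rw [Real.sin_add] at this
      nlinarith

noncomputable def pd : ℝ → ℝ := gaussianPDFReal 0 1

lemma pd_nonneg (x : ℝ) : 0 ≤ pd x := gaussianPDFReal_nonneg 0 1 x

lemma mu2_eq_ofReal_integral (s : Set (ℝ × ℝ)) (hs : MeasurableSet s) :
    μ2 s = ENNReal.ofReal (∫ p : ℝ × ℝ, s.indicator (fun q => pd q.1 * pd q.2) p) := by
  have hpm : Measurable (gaussianPDF 0 1) := measurable_gaussianPDF 0 1
  have hγd : γ = volume.withDensity (gaussianPDF 0 1) :=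
    gaussianReal_of_var_ne_zero 0 one_ne_zero
  have hGm : Measurable (s.indicator
      (fun q : ℝ × ℝ => gaussianPDF 0 1 q.1 * gaussianPDF 0 1 q.2)) :=
    ((hpm.comp measurable_fst).mul (hpm.comp measurable_snd)).indicator hs
  have h1 : μ2 s = ∫⁻ p : ℝ × ℝ,
      s.indicator (fun q : ℝ × ℝ => gaussianPDF 0 1 q.1 * gaussianPDF 0 1 q.2) p ∂volume := by
    rw [Measure.volume_eq_prod, lintegral_prod _ hGm.aemeasurable]
    rw [μ2, Measure.prod_apply hs]
    have hinner : ∀ x : ℝ, γ (Prod.mk x ⁻¹' s)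
        = ∫⁻ y, (Prod.mk x ⁻¹' s).indicator (gaussianPDF 0 1) y ∂volume := by
      intro x
      rw [hγd, withDensity_apply _ (measurable_prodMk_left hs),
        lintegral_indicator (measurable_prodMk_left hs)]
    have houter : ∫⁻ x, γ (Prod.mk x ⁻¹' s) ∂γ
        = ∫⁻ x, gaussianPDF 0 1 x * γ (Prod.mk x ⁻¹' s) ∂volume := by
      conv_lhs => rw [hγd]
      rw [lintegral_withDensity_eq_lintegral_mul _ hpm
        (measurable_measure_prodMk_left hs)]
      rw [← hγd]
      rfl
    rw [houter]
    refine lintegral_congr fun x => ?_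
    rw [hinner x, ← lintegral_const_mul _ (hpm.indicator (measurable_prodMk_left hs))]
    refine lintegral_congr fun y => ?_
    by_cases hxy : (x, y) ∈ s
    · rw [Set.indicator_of_mem hxy, Set.indicator_of_mem (by exact hxy)]
    · rw [Set.indicator_of_notMem hxy, Set.indicator_of_notMem (by exact hxy), mul_zero]
  rw [h1]
  have h2 : ∀ p : ℝ × ℝ,
      s.indicator (fun q : ℝ × ℝ => gaussianPDF 0 1 q.1 * gaussianPDF 0 1 q.2) p
      = ENNReal.ofReal (s.indicator (fun q => pd q.1 * pd q.2) p) := by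
    intro p
    by_cases hp : p ∈ s
    · rw [Set.indicator_of_mem hp, Set.indicator_of_mem hp]
      show ENNReal.ofReal (pd p.1) * ENNReal.ofReal (pd p.2) = _
      rw [← ENNReal.ofReal_mul (pd_nonneg _)]
    · rw [Set.indicator_of_notMem hp, Set.indicator_of_notMem hp, ENNReal.ofReal_zero]
  simp_rw [h2]
  have hI : Integrable (fun q : ℝ × ℝ => pd q.1 * pd q.2) volume := by
    rw [Measure.volume_eq_prod]
    exact (integrable_gaussianPDFReal 0 1).mul_prod (integrable_gaussianPDFReal 0 1)
  rw [← ofReal_integral_eq_lintegral_ofReal (hI.indicator hs)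
    (ae_of_all _ fun p => Set.indicator_nonneg (fun q _ => mul_nonneg (pd_nonneg _) (pd_nonneg _)) p)]

lemma wedge_measure {b : ℝ} (hb : 0 < b) :
    μ2 {x : ℝ × ℝ | b * |x.1| ≤ x.2} = ENNReal.ofReal (Real.arctan (1/b) / π) := by
  set ψ := Real.arctan b with hψdef
  have hψ0 : 0 < ψ := by
    have := Real.arctan_strictMono hb; rwa [Real.arctan_zero] at this
  have hψ2 : ψ < π / 2 := Real.arctan_lt_pi_div_two b
  have hmeas : MeasurableSet {x : ℝ × ℝ | b * |x.1| ≤ x.2} :=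
    measurableSet_le (by fun_prop) (by fun_prop)
  rw [mu2_eq_ofReal_integral _ hmeas]
  congr 1
  rw [← integral_comp_polarCoord_symm]
  have htar : polarCoord.target = Ioi (0:ℝ) ×ˢ Ioo (-π) π := rfl
  rw [htar]
  have hpd_prod : ∀ x y : ℝ, pd x * pd y = Real.exp (-(x^2 + y^2)/2) * (2*π)⁻¹ := by
    intro x y
    unfold pd
    rw [gaussianPDFReal, gaussianPDFReal]
    push_cast
    have hinv : ((Real.sqrt (2*π*1))⁻¹ : ℝ) * (Real.sqrt (2*π*1))⁻¹ = (2*π)⁻¹ := by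
      rw [← mul_inv, mul_one, Real.mul_self_sqrt (by positivity)]
    have h2 : -(x-0)^2/(2*1) + -(y-0)^2/(2*1) = -(x^2+y^2)/2 := by ring
    calc (Real.sqrt (2*π*1))⁻¹ * Real.exp (-(x-0)^2/(2*1))
          * ((Real.sqrt (2*π*1))⁻¹ * Real.exp (-(y-0)^2/(2*1)))
        = ((Real.sqrt (2*π*1))⁻¹ * (Real.sqrt (2*π*1))⁻¹)
          * (Real.exp (-(x-0)^2/(2*1)) * Real.exp (-(y-0)^2/(2*1))) := by ring
      _ = (2*π)⁻¹ * Real.exp (-(x^2+y^2)/2) := by rw [hinv, ← Real.exp_add, h2]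
      _ = Real.exp (-(x^2+y^2)/2) * (2*π)⁻¹ := by ring
  have hEq : EqOn
      (fun p : ℝ × ℝ => p.1 • ({x : ℝ × ℝ | b * |x.1| ≤ x.2}.indicator
        (fun q => pd q.1 * pd q.2)) (polarCoord.symm p))
      (fun p : ℝ × ℝ => (p.1 * Real.exp (-(p.1^2)/2) * (2*π)⁻¹)
        * ((Icc ψ (π - ψ)).indicator (fun _ => (1:ℝ)) p.2))
      (Ioi (0:ℝ) ×ˢ Ioo (-π) π) := by
    intro p hp
    obtain ⟨hr, hθ⟩ := hp
    simp only [mem_Ioi] at hr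
    have hsymm : polarCoord.symm p = (p.1 * Real.cos p.2, p.1 * Real.sin p.2) := rfl
    simp only [hsymm]
    have hmem : ((p.1 * Real.cos p.2, p.1 * Real.sin p.2) ∈ {x : ℝ × ℝ | b * |x.1| ≤ x.2})
        ↔ p.2 ∈ Icc ψ (π - ψ) := by
      rw [← trig_iff hb hθ]
      simp only [mem_setOf_eq]
      rw [abs_mul, abs_of_pos hr]
      constructor
      · intro h
        have h' : p.1 * (b * |Real.cos p.2|) ≤ p.1 * Real.sin p.2 := by
          calc p.1 * (b * |Real.cos p.2|) = b * (p.1 * |Real.cos p.2|) := by ring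
            _ ≤ p.1 * Real.sin p.2 := h
        exact (mul_le_mul_iff_right₀ hr).1 h'
      · intro h
        have h' := (mul_le_mul_iff_right₀ hr).2 h
        calc b * (p.1 * |Real.cos p.2|) = p.1 * (b * |Real.cos p.2|) := by ring
          _ ≤ p.1 * Real.sin p.2 := h'
    by_cases hin : p.2 ∈ Icc ψ (π - ψ)
    · rw [Set.indicator_of_mem (hmem.2 hin), Set.indicator_of_mem hin, hpd_prod]
      have hr2 : -((p.1 * Real.cos p.2)^2 + (p.1 * Real.sin p.2)^2)/2 = -(p.1^2)/2 := by
        have := Real.sin_sq_add_cos_sq p.2; nlinarith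
      rw [hr2]
      simp only [smul_eq_mul]
      ring
    · rw [Set.indicator_of_notMem (fun hmem' => hin (hmem.1 hmem')),
        Set.indicator_of_notMem hin]
      simp
  rw [setIntegral_congr_fun (measurableSet_Ioi.prod measurableSet_Ioo) hEq]
  rw [Measure.volume_eq_prod, setIntegral_prod_mul
    (fun r : ℝ => r * Real.exp (-(r^2)/2) * (2*π)⁻¹)
    (fun θ : ℝ => (Icc ψ (π - ψ)).indicator (fun _ => (1:ℝ)) θ)]
  have hfst : ∫ r in Ioi (0:ℝ), r * Real.exp (-(r^2)/2) * (2*π)⁻¹ = (2*π)⁻¹ := by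
    rw [integral_mul_const, aux_radial, one_mul]
  have hicc : Icc ψ (π - ψ) ⊆ Ioo (-π) π :=
    Icc_subset_Ioo (by linarith [Real.pi_pos]) (by linarith)
  have hsnd : ∫ θ in Ioo (-π) π, (Icc ψ (π - ψ)).indicator (fun _ => (1:ℝ)) θ
      = π - 2*ψ := by
    rw [integral_indicator measurableSet_Icc]
    rw [setIntegral_const, measureReal_restrict_apply measurableSet_Icc,
      Set.inter_eq_self_of_subset_left hicc,
      Measure.real, Real.volume_Icc, ENNReal.toReal_ofReal (by linarith), smul_eq_mul, mul_one]
    ring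
  rw [hfst, hsnd]
  have harc : Real.arctan (1/b) = π/2 - ψ := by
    rw [one_div, Real.arctan_inv_of_pos hb]
  rw [harc]
  have hπ : π ≠ 0 := Real.pi_ne_zero
  field_simp

lemma sign_ne_one_iff {t : ℝ} : (1 : ℝ) ≠ Real.sign t ↔ t ≤ 0 := by
  rcases lt_trichotomy t 0 with h | h | h
  · simp only [Real.sign_of_neg h]; constructor <;> intro <;> first | exact h.le | norm_num
  · subst h; simp [Real.sign_zero]
  · simp [Real.sign_of_pos h, h, not_le.2 h]

lemma sign_ne_neg_one_iff {t : ℝ} : (-1 : ℝ) ≠ Real.sign t ↔ 0 ≤ t := by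
  rcases lt_trichotomy t 0 with h | h | h
  · simp [Real.sign_of_neg h, not_le.2 h]
  · subst h; simp [Real.sign_zero]
  · simp only [Real.sign_of_pos h]; constructor <;> intro <;> first | exact h.le | norm_num

theorem stmt_19 (b : ℝ) (hb : 0 < b)
    (μ : Measure (ℝ × ℝ)) (hμ : μ = (gaussianReal 0 1).prod (gaussianReal 0 1))
    (label : ℝ × ℝ → ℝ)
    (hlabel : ∀ x : ℝ × ℝ, label x = if x.2 < b * |x.1| then 1 else -1)
    (OPT : ℝ)
    (hOPT : OPT = sInf {e : ℝ | ∃ w : ℝ × ℝ, w.1 ^ 2 + w.2 ^ 2 = 1 ∧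
      e = (μ {x | label x ≠ Real.sign (w.1 * x.1 + w.2 * x.2)}).toReal}) :
    OPT = 1 / 2 - Real.arctan (1 / b) / Real.pi ∧
    Tendsto (fun b' : ℝ => 1 / 2 - Real.arctan (1 / b') / Real.pi)
      (nhdsWithin 0 (Set.Ioi 0)) (nhds 0) ∧
    Tendsto (fun b' : ℝ => 1 / 2 - Real.arctan (1 / b') / Real.pi)
      atTop (nhds (1 / 2)) := by
  have hμ2 : μ = μ2 := hμ
  subst hμ2
  set L : ℝ := 1 / 2 - Real.arctan (1 / b) / π with hL
  set W : Set (ℝ × ℝ) := {x : ℝ × ℝ | b * |x.1| ≤ x.2} with hW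
  have hWmeas : MeasurableSet W := measurableSet_le (by fun_prop) (by fun_prop)
  have hWval : (μ2 W).toReal = Real.arctan (1/b) / π := by
    rw [hW, wedge_measure hb, ENNReal.toReal_ofReal]
    have h0 : 0 < Real.arctan (1/b) := by
      have := Real.arctan_strictMono (show (0:ℝ) < 1/b by positivity)
      rwa [Real.arctan_zero] at this
    positivity
  -- disagreement set decomposition
  have hDeq : ∀ w : ℝ × ℝ,
      {x : ℝ × ℝ | label x ≠ Real.sign (w.1 * x.1 + w.2 * x.2)}
      = (({x : ℝ × ℝ | w.1 * x.1 + w.2 * x.2 ≤ 0}) \ W)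
        ∪ (W ∩ {x : ℝ × ℝ | 0 ≤ w.1 * x.1 + w.2 * x.2}) := by
    intro w
    ext x
    by_cases hx : x ∈ W
    · have hnlt : ¬ x.2 < b * |x.1| := not_lt.2 hx
      simp only [mem_setOf_eq, hlabel x, if_neg hnlt, mem_union, mem_diff, mem_inter_iff, hx,
        not_true, and_false, false_or, true_and, sign_ne_neg_one_iff]
    · have hlt : x.2 < b * |x.1| := not_le.1 hx
      simp only [mem_setOf_eq, hlabel x, if_pos hlt, mem_union, mem_diff, mem_inter_iff, hx,
        and_true, false_and, or_false, sign_ne_one_iff]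
      tauto
  have herr : ∀ w : ℝ × ℝ, w ≠ 0 →
      (μ2 {x : ℝ × ℝ | label x ≠ Real.sign (w.1 * x.1 + w.2 * x.2)}).toReal
      = 1/2 - (μ2 ({x : ℝ × ℝ | w.1 * x.1 + w.2 * x.2 ≤ 0} ∩ W)).toReal
        + (μ2 (W ∩ {x : ℝ × ℝ | 0 ≤ w.1 * x.1 + w.2 * x.2})).toReal := by
    intro w hw
    set f : ℝ × ℝ → ℝ := fun x => w.1 * x.1 + w.2 * x.2 with hf
    have hfm : Measurable f := by fun_prop
    have hA : MeasurableSet {x : ℝ × ℝ | f x ≤ 0} := hfm measurableSet_Iic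
    have hB : MeasurableSet {x : ℝ × ℝ | 0 ≤ f x} := hfm measurableSet_Ici
    rw [hDeq w]
    have hdisj : Disjoint ({x : ℝ × ℝ | f x ≤ 0} \ W)
        (W ∩ {x : ℝ × ℝ | 0 ≤ f x}) := by
      refine Set.disjoint_left.2 fun x hx1 hx2 => hx1.2 hx2.1
    rw [measure_union hdisj ((hWmeas.inter hB))]
    have hsplit : μ2 ({x : ℝ × ℝ | f x ≤ 0} \ W) + μ2 ({x : ℝ × ℝ | f x ≤ 0} ∩ W)
        = μ2 {x : ℝ × ℝ | f x ≤ 0} := measure_diff_add_inter _ hWmeas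
    have hhalf : μ2 {x : ℝ × ℝ | f x ≤ 0} = 1/2 := halfplane_half w hw
    have h1 : (μ2 ({x : ℝ × ℝ | f x ≤ 0} \ W)).toReal
        = 1/2 - (μ2 ({x : ℝ × ℝ | f x ≤ 0} ∩ W)).toReal := by
      have := congrArg ENNReal.toReal hsplit
      rw [ENNReal.toReal_add (measure_ne_top _ _) (measure_ne_top _ _), hhalf] at this
      have h2 : ((1:ℝ≥0∞)/2).toReal = 1/2 := by simp
      rw [h2] at this
      linarith
    rw [ENNReal.toReal_add (measure_ne_top _ _) (measure_ne_top _ _), h1]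
  -- the optimal halfspace
  have hmemL : L ∈ {e : ℝ | ∃ w : ℝ × ℝ, w.1 ^ 2 + w.2 ^ 2 = 1 ∧
      e = (μ2 {x | label x ≠ Real.sign (w.1 * x.1 + w.2 * x.2)}).toReal} := by
    refine ⟨((0 : ℝ), (-1 : ℝ)), by norm_num, ?_⟩
    have hw0 : ((0 : ℝ), (-1 : ℝ)) ≠ (0 : ℝ × ℝ) := by
      intro h
      have := congrArg Prod.snd h
      norm_num at this
    rw [herr _ hw0]
    have hsub1 : W ⊆ {x : ℝ × ℝ | (0:ℝ) * x.1 + (-1:ℝ) * x.2 ≤ 0} := by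
      intro x hx
      have hx' : b * |x.1| ≤ x.2 := hx
      have : 0 ≤ x.2 := le_trans (by positivity) hx'
      simp only [mem_setOf_eq]
      linarith
    have h1 : {x : ℝ × ℝ | (0:ℝ) * x.1 + (-1:ℝ) * x.2 ≤ 0} ∩ W = W :=
      Set.inter_eq_self_of_subset_right hsub1
    have h2 : μ2 (W ∩ {x : ℝ × ℝ | 0 ≤ (0:ℝ) * x.1 + (-1:ℝ) * x.2}) = 0 := by
      refine measure_mono_null ?_ (null_line ((0 : ℝ), (-1 : ℝ)) hw0)
      intro x ⟨hx1, hx2⟩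
      have hx1' : b * |x.1| ≤ x.2 := hx1
      have hge : 0 ≤ x.2 := le_trans (by positivity) hx1'
      have hle : x.2 ≤ 0 := by
        simp only [mem_setOf_eq] at hx2; linarith
      have : x.2 = 0 := le_antisymm hle hge
      simp only [mem_setOf_eq]
      linarith
    rw [h1, h2, hWval]
    simp [hL]
  have hlb : ∀ e ∈ {e : ℝ | ∃ w : ℝ × ℝ, w.1 ^ 2 + w.2 ^ 2 = 1 ∧
      e = (μ2 {x | label x ≠ Real.sign (w.1 * x.1 + w.2 * x.2)}).toReal}, L ≤ e := by
    rintro e ⟨w, hw1, rfl⟩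
    have hw0 : w ≠ 0 := by
      intro h
      rw [h] at hw1
      norm_num at hw1
    rw [herr w hw0]
    have hm1 : (μ2 ({x : ℝ × ℝ | w.1 * x.1 + w.2 * x.2 ≤ 0} ∩ W)).toReal
        ≤ (μ2 W).toReal :=
      ENNReal.toReal_mono (measure_ne_top _ _) (measure_mono Set.inter_subset_right)
    have hm2 : 0 ≤ (μ2 (W ∩ {x : ℝ × ℝ | 0 ≤ w.1 * x.1 + w.2 * x.2})).toReal :=
      ENNReal.toReal_nonneg
    rw [hL]
    rw [← hWval]
    linarith
  refine ⟨?_, ?_, ?_⟩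
  · rw [hOPT]
    exact le_antisymm (csInf_le ⟨L, hlb⟩ hmemL) (le_csInf ⟨L, hmemL⟩ hlb)
  · have h1 : Tendsto (fun b' : ℝ => 1 / b') (nhdsWithin 0 (Set.Ioi 0)) atTop := by
      simpa [one_div] using tendsto_inv_nhdsGT_zero
    have h2 : Tendsto Real.arctan atTop (nhds (π / 2)) :=
      Real.tendsto_arctan_atTop.mono_right nhdsWithin_le_nhds
    have h3 := ((h2.comp h1).div_const π).const_sub (1/2 : ℝ)
    have h4 : (1:ℝ)/2 - (π/2)/π = 0 := by
      field_simp
      ring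
    rw [h4] at h3
    exact h3
  · have h1 : Tendsto (fun b' : ℝ => 1 / b') atTop (nhds 0) := by
      simpa [one_div] using tendsto_inv_atTop_zero (𝕜 := ℝ)
    have h2 : Tendsto Real.arctan (nhds (0:ℝ)) (nhds 0) := by
      have := Real.continuous_arctan.tendsto 0
      rwa [Real.arctan_zero] at this
    have h3 := (((h2.comp h1)).div_const π).const_sub (1/2 : ℝ)
    have h4 : (1:ℝ)/2 - 0/π = 1/2 := by norm_num
    rw [h4] at h3
    exact h3
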